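/- For integers n_1, n_2 ≥ 2, the function f defined by f(i,j) = (i-1)n_2 + j if i and j are both odd; (i-1)n_2 + (n_2+1-j) if i and j are both even; (n_1-i)n_2 + j + ε if i is odd and j is even; and (n_1-i)n_2 + (n_2+1-j+ε) if i is even and j is odd, where ε = 1 if n_1 is even and n_2 is odd and ε = 0 otherwise, is a Q_2-magic vertex labeling of Grid(n_1,n_2) with Q_2-magic sum 2(n_1 n_2 + 1) if n_1 is odd or n_2 is even, and 2(n_1 n_2 + 2) if n_1 is even and n_2 is odd. -/

import Mathlib

/-- The grid graph `Grid(n 0, …, n (d-1))`: vertices are tuples whose `i`-th coordinate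
ranges over a set of size `n i` (we use `Fin (n i) = {0, …, n i - 1}`, corresponding to the
coordinate `[n i] = {1, …, n i}` via `v ↦ v + 1`); two vertices are adjacent iff they differ
by exactly one in one coordinate and agree in all others. -/
def gridGraph {d : ℕ} (n : Fin d → ℕ) : SimpleGraph (∀ i, Fin (n i)) where
  Adj x y := ∃ i, ((x i : ℕ) + 1 = (y i : ℕ) ∨ (y i : ℕ) + 1 = (x i : ℕ)) ∧
    ∀ j, j ≠ i → x j = y j
  symm := by
    constructor
    rintro x y ⟨i, h, hj⟩
    exact ⟨i, h.symm, fun j hji => (hj j hji).symm⟩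
  loopless := by
    constructor
    rintro x ⟨i, h, -⟩
    rcases h with h | h <;> omega

/-- `f` is an `H`-magic vertex labeling of `G` with `H`-magic sum `c`:
a bijection from the vertices of `G` onto `{1, …, |V|}` such that the vertex labels of every
subgraph of `G` isomorphic to `H` sum to `c`. -/
def IsMagicVertexLabeling {V : Type*} [Fintype V] {W : Type*}
    (G : SimpleGraph V) (H : SimpleGraph W) (f : V → ℤ) (c : ℤ) : Prop :=
  Set.BijOn f Set.univ (Set.Icc 1 (Fintype.card V : ℤ)) ∧
  ∀ G' : G.Subgraph, Nonempty (G'.coe ≃g H) → ∑ᶠ v ∈ G'.verts, f v = c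

/-- `g` is an `H`-magic edge labeling of `G` with `H`-magic sum `c`:
a bijection from the edges of `G` onto `{1, …, |E|}` such that the edge labels of every
subgraph of `G` isomorphic to `H` sum to `c`. -/
def IsMagicEdgeLabeling {V : Type*} [Fintype V] {W : Type*}
    (G : SimpleGraph V) (H : SimpleGraph W) (g : Sym2 V → ℤ) (c : ℤ) : Prop :=
  Set.BijOn g G.edgeSet (Set.Icc 1 (G.edgeSet.ncard : ℤ)) ∧
  ∀ G' : G.Subgraph, Nonempty (G'.coe ≃g H) → ∑ᶠ e ∈ G'.edgeSet, g e = c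

/-- `G` admits an `H`-covering: every edge of `G` belongs to at least one subgraph of `G`
isomorphic to `H`. -/
def AdmitsCovering {V W : Type*} (G : SimpleGraph V) (H : SimpleGraph W) : Prop :=
  ∀ e ∈ G.edgeSet, ∃ G' : G.Subgraph, e ∈ G'.edgeSet ∧ Nonempty (G'.coe ≃g H)

/-- `(Fv, Fe)` is an `H`-supermagic labeling of `G` with `H`-supermagic sum `c`:
the vertex part is a bijection onto `{1, …, |V|}`, the edge part is a bijection from the
edges onto `{|V|+1, …, |V|+|E|}` (together a bijection `V ∪ E → {1, …, |V|+|E|}` mapping `V`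
onto `{1, …, |V|}`), and the labels of every subgraph isomorphic to `H` sum to `c`. -/
def IsSupermagicLabeling {V : Type*} [Fintype V] {W : Type*}
    (G : SimpleGraph V) (H : SimpleGraph W) (Fv : V → ℤ) (Fe : Sym2 V → ℤ) (c : ℤ) : Prop :=
  Set.BijOn Fv Set.univ (Set.Icc 1 (Fintype.card V : ℤ)) ∧
  Set.BijOn Fe G.edgeSet
    (Set.Icc ((Fintype.card V : ℤ) + 1) ((Fintype.card V : ℤ) + (G.edgeSet.ncard : ℤ))) ∧
  ∀ G' : G.Subgraph, Nonempty (G'.coe ≃g H) →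
    (∑ᶠ v ∈ G'.verts, Fv v) + (∑ᶠ e ∈ G'.edgeSet, Fe e) = c

/-- `G` is `H`-supermagic with `H`-supermagic sum `c`. -/
def IsSupermagic {V : Type*} [Fintype V] {W : Type*}
    (G : SimpleGraph V) (H : SimpleGraph W) (c : ℤ) : Prop :=
  AdmitsCovering G H ∧ ∃ Fv Fe, IsSupermagicLabeling G H Fv Fe c

/-! ### Auxiliary definitions and lemmas -/

def Ffun (n₁ n₂ i j : ℕ) : ℤ :=
  let ε : ℤ := if Even n₁ ∧ Odd n₂ then 1 else 0
  if Odd i ∧ Odd j then ((i : ℤ) - 1) * n₂ + j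
  else if Even i ∧ Even j then ((i : ℤ) - 1) * n₂ + ((n₂ : ℤ) + 1 - j)
  else if Odd i then ((n₁ : ℤ) - i) * n₂ + j + ε
  else ((n₁ : ℤ) - i) * n₂ + ((n₂ : ℤ) + 1 - j + ε)

def Eps (n₁ n₂ : ℕ) : ℤ := if Even n₁ ∧ Odd n₂ then 1 else 0

lemma Eps_cases (n₁ n₂ : ℕ) :
    (n₁ % 2 = 0 ∧ n₂ % 2 = 1 ∧ Eps n₁ n₂ = 1) ∨
    ((¬ n₁ % 2 = 0 ∨ ¬ n₂ % 2 = 1) ∧ Eps n₁ n₂ = 0) := by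
  rw [Eps]
  split_ifs with h
  · exact Or.inl ⟨Nat.even_iff.1 h.1, Nat.odd_iff.1 h.2, rfl⟩
  · rw [Decidable.not_and_iff_or_not, Nat.even_iff, Nat.odd_iff] at h
    exact Or.inr ⟨h, rfl⟩

lemma F_oo {n₁ n₂ i j : ℕ} (hi : i % 2 = 1) (hj : j % 2 = 1) :
    Ffun n₁ n₂ i j = ((i : ℤ) - 1) * n₂ + j := by
  rw [Ffun, if_pos ⟨Nat.odd_iff.2 hi, Nat.odd_iff.2 hj⟩]

lemma F_ee {n₁ n₂ i j : ℕ} (hi : i % 2 = 0) (hj : j % 2 = 0) :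
    Ffun n₁ n₂ i j = ((i : ℤ) - 1) * n₂ + ((n₂ : ℤ) + 1 - j) := by
  rw [Ffun, if_neg (by simp [Nat.odd_iff, hi]), if_pos ⟨Nat.even_iff.2 hi, Nat.even_iff.2 hj⟩]

lemma F_oe {n₁ n₂ i j : ℕ} (hi : i % 2 = 1) (hj : j % 2 = 0) :
    Ffun n₁ n₂ i j = ((n₁ : ℤ) - i) * n₂ + ((j : ℤ) + Eps n₁ n₂) := by
  rw [Ffun, if_neg (by simp [Nat.odd_iff, hj]), if_neg (by simp [Nat.even_iff, hi]),
    if_pos (Nat.odd_iff.2 hi), Eps]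
  ring

lemma F_eo {n₁ n₂ i j : ℕ} (hi : i % 2 = 0) (hj : j % 2 = 1) :
    Ffun n₁ n₂ i j = ((n₁ : ℤ) - i) * n₂ + ((n₂ : ℤ) + 1 - j + Eps n₁ n₂) := by
  rw [Ffun, if_neg (by simp [Nat.odd_iff, hi]), if_neg (by simp [Nat.even_iff, hj]),
    if_neg (by simp [Nat.odd_iff, hi]), Eps]

lemma keyGen {n a b r s : ℤ} (hn : 1 ≤ n) (h : a*n + r = b*n + s)
    (hr : 1 ≤ r) (hr' : r ≤ n+1) (hs : 1 ≤ s) (hs' : s ≤ n+1) :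
    (a = b ∧ r = s) ∨ (a + 1 = b ∧ r = s + n) ∨ (b + 1 = a ∧ s = r + n) := by
  have hd : (a - b) * n = s - r := by linear_combination h
  have h1 : a - b ≤ 1 := by
    by_contra h'
    push_neg at h'
    nlinarith [mul_le_mul_of_nonneg_right (show (2:ℤ) ≤ a - b by omega) (show (0:ℤ) ≤ n by omega)]
  have h2 : -1 ≤ a - b := by
    by_contra h'
    push_neg at h'
    nlinarith [mul_le_mul_of_nonneg_right (show a - b ≤ -2 by omega) (show (0:ℤ) ≤ n by omega)]
  rcases (by omega : a - b = -1 ∨ a - b = 0 ∨ a - b = 1) with h3 | h3 | h3 <;> rw [h3] at hd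
  · exact Or.inr (Or.inl (by constructor <;> omega))
  · exact Or.inl (by constructor <;> omega)
  · exact Or.inr (Or.inr (by constructor <;> omega))

lemma Finj (n₁ n₂ i j i' j' : ℕ) (h₂ : 2 ≤ n₂)
    (hi1 : 1 ≤ i) (hi2 : i ≤ n₁) (hj1 : 1 ≤ j) (hj2 : j ≤ n₂)
    (hi1' : 1 ≤ i') (hi2' : i' ≤ n₁) (hj1' : 1 ≤ j') (hj2' : j' ≤ n₂)
    (h : Ffun n₁ n₂ i j = Ffun n₁ n₂ i' j') : i = i' ∧ j = j' := by
  have hE := Eps_cases n₁ n₂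
  rcases Nat.mod_two_eq_zero_or_one i with hi | hi <;>
    rcases Nat.mod_two_eq_zero_or_one j with hj | hj <;>
    rcases Nat.mod_two_eq_zero_or_one i' with hi' | hi' <;>
    rcases Nat.mod_two_eq_zero_or_one j' with hj' | hj'
  · rw [F_ee hi hj, F_ee hi' hj'] at h
    rcases keyGen (n := (n₂:ℤ)) (by omega) h
      (by omega) (by omega) (by omega) (by omega) with ⟨e1,e2⟩|⟨e1,e2⟩|⟨e1,e2⟩ <;> omega
  · rw [F_ee hi hj, F_eo hi' hj'] at h
    rcases keyGen (n := (n₂:ℤ)) (by omega) h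
      (by omega) (by omega) (by omega) (by omega) with ⟨e1,e2⟩|⟨e1,e2⟩|⟨e1,e2⟩ <;> omega
  · rw [F_ee hi hj, F_oe hi' hj'] at h
    rcases keyGen (n := (n₂:ℤ)) (by omega) h
      (by omega) (by omega) (by omega) (by omega) with ⟨e1,e2⟩|⟨e1,e2⟩|⟨e1,e2⟩ <;> omega
  · rw [F_ee hi hj, F_oo hi' hj'] at h
    rcases keyGen (n := (n₂:ℤ)) (by omega) h
      (by omega) (by omega) (by omega) (by omega) with ⟨e1,e2⟩|⟨e1,e2⟩|⟨e1,e2⟩ <;> omega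
  · rw [F_eo hi hj, F_ee hi' hj'] at h
    rcases keyGen (n := (n₂:ℤ)) (by omega) h
      (by omega) (by omega) (by omega) (by omega) with ⟨e1,e2⟩|⟨e1,e2⟩|⟨e1,e2⟩ <;> omega
  · rw [F_eo hi hj, F_eo hi' hj'] at h
    rcases keyGen (n := (n₂:ℤ)) (by omega) h
      (by omega) (by omega) (by omega) (by omega) with ⟨e1,e2⟩|⟨e1,e2⟩|⟨e1,e2⟩ <;> omega
  · rw [F_eo hi hj, F_oe hi' hj'] at h
    rcases keyGen (n := (n₂:ℤ)) (by omega) h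
      (by omega) (by omega) (by omega) (by omega) with ⟨e1,e2⟩|⟨e1,e2⟩|⟨e1,e2⟩ <;> omega
  · rw [F_eo hi hj, F_oo hi' hj'] at h
    rcases keyGen (n := (n₂:ℤ)) (by omega) h
      (by omega) (by omega) (by omega) (by omega) with ⟨e1,e2⟩|⟨e1,e2⟩|⟨e1,e2⟩ <;> omega
  · rw [F_oe hi hj, F_ee hi' hj'] at h
    rcases keyGen (n := (n₂:ℤ)) (by omega) h
      (by omega) (by omega) (by omega) (by omega) with ⟨e1,e2⟩|⟨e1,e2⟩|⟨e1,e2⟩ <;> omega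
  · rw [F_oe hi hj, F_eo hi' hj'] at h
    rcases keyGen (n := (n₂:ℤ)) (by omega) h
      (by omega) (by omega) (by omega) (by omega) with ⟨e1,e2⟩|⟨e1,e2⟩|⟨e1,e2⟩ <;> omega
  · rw [F_oe hi hj, F_oe hi' hj'] at h
    rcases keyGen (n := (n₂:ℤ)) (by omega) h
      (by omega) (by omega) (by omega) (by omega) with ⟨e1,e2⟩|⟨e1,e2⟩|⟨e1,e2⟩ <;> omega
  · rw [F_oe hi hj, F_oo hi' hj'] at h
    rcases keyGen (n := (n₂:ℤ)) (by omega) h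
      (by omega) (by omega) (by omega) (by omega) with ⟨e1,e2⟩|⟨e1,e2⟩|⟨e1,e2⟩ <;> omega
  · rw [F_oo hi hj, F_ee hi' hj'] at h
    rcases keyGen (n := (n₂:ℤ)) (by omega) h
      (by omega) (by omega) (by omega) (by omega) with ⟨e1,e2⟩|⟨e1,e2⟩|⟨e1,e2⟩ <;> omega
  · rw [F_oo hi hj, F_eo hi' hj'] at h
    rcases keyGen (n := (n₂:ℤ)) (by omega) h
      (by omega) (by omega) (by omega) (by omega) with ⟨e1,e2⟩|⟨e1,e2⟩|⟨e1,e2⟩ <;> omega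
  · rw [F_oo hi hj, F_oe hi' hj'] at h
    rcases keyGen (n := (n₂:ℤ)) (by omega) h
      (by omega) (by omega) (by omega) (by omega) with ⟨e1,e2⟩|⟨e1,e2⟩|⟨e1,e2⟩ <;> omega
  · rw [F_oo hi hj, F_oo hi' hj'] at h
    rcases keyGen (n := (n₂:ℤ)) (by omega) h
      (by omega) (by omega) (by omega) (by omega) with ⟨e1,e2⟩|⟨e1,e2⟩|⟨e1,e2⟩ <;> omega

lemma bnd {n N a r : ℤ} (ha : 0 ≤ a) (ha' : a ≤ N - 1) (hr : 1 ≤ r) (hr' : r ≤ n) :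
    1 ≤ a * n + r ∧ a * n + r ≤ N * n := by
  have hn : 0 ≤ n := le_trans (by omega) hr'
  constructor
  · nlinarith [mul_nonneg ha hn]
  · nlinarith [mul_le_mul_of_nonneg_right ha' hn]

lemma Frange (n₁ n₂ i j : ℕ) (h₂ : 2 ≤ n₂)
    (hi1 : 1 ≤ i) (hi2 : i ≤ n₁) (hj1 : 1 ≤ j) (hj2 : j ≤ n₂) :
    1 ≤ Ffun n₁ n₂ i j ∧ Ffun n₁ n₂ i j ≤ (n₁ : ℤ) * n₂ := by
  have hE := Eps_cases n₁ n₂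
  rcases Nat.mod_two_eq_zero_or_one i with hi | hi <;>
    rcases Nat.mod_two_eq_zero_or_one j with hj | hj
  · rw [F_ee hi hj]
    exact bnd (by omega) (by omega) (by omega) (by omega)
  · by_cases hc : j = 1 ∧ Eps n₁ n₂ = 1
    · have hF : Ffun n₁ n₂ i j = ((n₁ : ℤ) - i + 1) * n₂ + 1 := by
        rw [F_eo hi hj, hc.1, hc.2]; push_cast; ring
      rw [hF]
      exact bnd (by omega) (by omega) (by omega) (by omega)
    · rw [F_eo hi hj]
      refine bnd (by omega) (by omega) (by omega) ?_
      rcases hE with ⟨e1, e2, e3⟩ | ⟨e1, e2⟩ <;> omega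
  · rw [F_oe hi hj]
    refine bnd (by omega) (by omega) (by omega) ?_
    rcases hE with ⟨e1, e2, e3⟩ | ⟨e1, e2⟩ <;> omega
  · rw [F_oo hi hj]
    exact bnd (by omega) (by omega) (by omega) (by omega)

lemma Fsum (n₁ n₂ i j : ℕ) :
    Ffun n₁ n₂ i j + Ffun n₁ n₂ (i+1) j + Ffun n₁ n₂ i (j+1) + Ffun n₁ n₂ (i+1) (j+1)
      = 2 * ((n₁:ℤ)*n₂ + 1) + 2 * Eps n₁ n₂ := by
  rcases Nat.mod_two_eq_zero_or_one i with hi | hi <;>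
    rcases Nat.mod_two_eq_zero_or_one j with hj | hj
  · rw [F_ee hi hj, F_oe (by omega) hj, F_eo hi (by omega), F_oo (by omega) (by omega), Eps]
    split_ifs <;> push_cast <;> ring
  · rw [F_eo hi hj, F_oo (by omega) hj, F_ee hi (by omega), F_oe (by omega) (by omega), Eps]
    split_ifs <;> push_cast <;> ring
  · rw [F_oe hi hj, F_ee (by omega) hj, F_oo hi (by omega), F_eo (by omega) (by omega), Eps]
    split_ifs <;> push_cast <;> ring
  · rw [F_oo hi hj, F_eo (by omega) hj, F_oe hi (by omega), F_ee (by omega) (by omega), Eps]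
    split_ifs <;> push_cast <;> ring

lemma grid_adj_coords {n₁ n₂ : ℕ} {x y : ∀ i, Fin (![n₁, n₂] i)}
    (h : (gridGraph ![n₁, n₂]).Adj x y) :
    (((x 0 : ℕ) + 1 = (y 0 : ℕ) ∨ (y 0 : ℕ) + 1 = (x 0 : ℕ)) ∧ (x 1 : ℕ) = (y 1 : ℕ)) ∨
    ((x 0 : ℕ) = (y 0 : ℕ) ∧ ((x 1 : ℕ) + 1 = (y 1 : ℕ) ∨ (y 1 : ℕ) + 1 = (x 1 : ℕ))) := by
  obtain ⟨i, hs, he⟩ := h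
  fin_cases i
  · exact Or.inl ⟨hs, congrArg Fin.val (he 1 (by decide))⟩
  · exact Or.inr ⟨congrArg Fin.val (he 0 (by decide)), hs⟩

lemma vert_ext {n₁ n₂ : ℕ} {x y : ∀ i, Fin (![n₁, n₂] i)}
    (h0 : (x 0 : ℕ) = (y 0 : ℕ)) (h1 : (x 1 : ℕ) = (y 1 : ℕ)) : x = y := by
  funext i
  fin_cases i
  · exact Fin.ext h0
  · exact Fin.ext h1

lemma coord0_lt {n₁ n₂ : ℕ} (x : ∀ i, Fin (![n₁, n₂] i)) : (x 0 : ℕ) < n₁ := (x 0).isLt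
lemma coord1_lt {n₁ n₂ : ℕ} (x : ∀ i, Fin (![n₁, n₂] i)) : (x 1 : ℕ) < n₂ := (x 1).isLt

lemma square_coords (a0 a1 b0 b1 c0 c1 d0 d1 : ℕ)
    (hAB : ((a0+1=b0 ∨ b0+1=a0) ∧ a1=b1) ∨ (a0=b0 ∧ (a1+1=b1 ∨ b1+1=a1)))
    (hBD : ((b0+1=d0 ∨ d0+1=b0) ∧ b1=d1) ∨ (b0=d0 ∧ (b1+1=d1 ∨ d1+1=b1)))
    (hDC : ((d0+1=c0 ∨ c0+1=d0) ∧ d1=c1) ∨ (d0=c0 ∧ (d1+1=c1 ∨ c1+1=d1)))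
    (hCA : ((c0+1=a0 ∨ a0+1=c0) ∧ c1=a1) ∨ (c0=a0 ∧ (c1+1=a1 ∨ a1+1=c1)))
    (hAD : ¬(a0 = d0 ∧ a1 = d1)) (hBC : ¬(b0 = c0 ∧ b1 = c1)) :
    (a0+1=d0 ∨ d0+1=a0) ∧ (a1+1=d1 ∨ d1+1=a1) ∧
    b0+c0 = a0+d0 ∧ b1+c1 = a1+d1 ∧
    (b0=a0 ∨ b0=d0) ∧ (b1=a1 ∨ b1=d1) := by
  omega

section quadperm
variable {α : Type*} (a b c d : α)
lemma qp1 : ({a, b, c, d} : Set α) = {a, c, b, d} := by ext x; simp [Set.mem_insert_iff]; tauto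
lemma qp2 : ({a, b, c, d} : Set α) = {b, d, a, c} := by ext x; simp [Set.mem_insert_iff]; tauto
lemma qp3 : ({a, b, c, d} : Set α) = {c, d, a, b} := by ext x; simp [Set.mem_insert_iff]; tauto
lemma qp4 : ({a, b, c, d} : Set α) = {c, a, d, b} := by ext x; simp [Set.mem_insert_iff]; tauto
lemma qp5 : ({a, b, c, d} : Set α) = {b, a, d, c} := by ext x; simp [Set.mem_insert_iff]; tauto
lemma qp6 : ({a, b, c, d} : Set α) = {d, b, c, a} := by ext x; simp [Set.mem_insert_iff]; tauto
lemma qp7 : ({a, b, c, d} : Set α) = {d, c, b, a} := by ext x; simp [Set.mem_insert_iff]; tauto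
end quadperm

lemma classify_core {n₁ n₂ : ℕ} (S : Set (∀ i, Fin (![n₁, n₂] i)))
    (Av Bv Cv Dv : ∀ i, Fin (![n₁, n₂] i))
    (hverts : S = {Av, Bv, Cv, Dv})
    (hab : (((Av 0 : ℕ) + 1 = (Bv 0 : ℕ) ∨ (Bv 0 : ℕ) + 1 = (Av 0 : ℕ)) ∧ (Av 1 : ℕ) = (Bv 1 : ℕ)) ∨
      ((Av 0 : ℕ) = (Bv 0 : ℕ) ∧ ((Av 1 : ℕ) + 1 = (Bv 1 : ℕ) ∨ (Bv 1 : ℕ) + 1 = (Av 1 : ℕ))))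
    (hbd : (((Bv 0 : ℕ) + 1 = (Dv 0 : ℕ) ∨ (Dv 0 : ℕ) + 1 = (Bv 0 : ℕ)) ∧ (Bv 1 : ℕ) = (Dv 1 : ℕ)) ∨
      ((Bv 0 : ℕ) = (Dv 0 : ℕ) ∧ ((Bv 1 : ℕ) + 1 = (Dv 1 : ℕ) ∨ (Dv 1 : ℕ) + 1 = (Bv 1 : ℕ))))
    (hdc : (((Dv 0 : ℕ) + 1 = (Cv 0 : ℕ) ∨ (Cv 0 : ℕ) + 1 = (Dv 0 : ℕ)) ∧ (Dv 1 : ℕ) = (Cv 1 : ℕ)) ∨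
      ((Dv 0 : ℕ) = (Cv 0 : ℕ) ∧ ((Dv 1 : ℕ) + 1 = (Cv 1 : ℕ) ∨ (Cv 1 : ℕ) + 1 = (Dv 1 : ℕ))))
    (hca : (((Cv 0 : ℕ) + 1 = (Av 0 : ℕ) ∨ (Av 0 : ℕ) + 1 = (Cv 0 : ℕ)) ∧ (Cv 1 : ℕ) = (Av 1 : ℕ)) ∨
      ((Cv 0 : ℕ) = (Av 0 : ℕ) ∧ ((Cv 1 : ℕ) + 1 = (Av 1 : ℕ) ∨ (Av 1 : ℕ) + 1 = (Cv 1 : ℕ))))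
    (hADne : ¬((Av 0 : ℕ) = (Dv 0 : ℕ) ∧ (Av 1 : ℕ) = (Dv 1 : ℕ)))
    (hBCne : ¬((Bv 0 : ℕ) = (Cv 0 : ℕ) ∧ (Bv 1 : ℕ) = (Cv 1 : ℕ)))
    (hBAne : ¬((Bv 0 : ℕ) = (Av 0 : ℕ) ∧ (Bv 1 : ℕ) = (Av 1 : ℕ)))
    (hBDne : ¬((Bv 0 : ℕ) = (Dv 0 : ℕ) ∧ (Bv 1 : ℕ) = (Dv 1 : ℕ))) :
    ∃ A B C D : ∀ i, Fin (![n₁, n₂] i),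
      S = {A, B, C, D} ∧
      (B 0 : ℕ) = (A 0 : ℕ) + 1 ∧ (B 1 : ℕ) = (A 1 : ℕ) ∧
      (C 0 : ℕ) = (A 0 : ℕ) ∧ (C 1 : ℕ) = (A 1 : ℕ) + 1 ∧
      (D 0 : ℕ) = (A 0 : ℕ) + 1 ∧ (D 1 : ℕ) = (A 1 : ℕ) + 1 := by
  obtain ⟨s0, s1, e0, e1, t0, t1⟩ :=
    square_coords _ _ _ _ _ _ _ _ hab hbd hdc hca hADne hBCne
  have hset : ∀ X1 X2 X3 X4 : ∀ i, Fin (![n₁, n₂] i),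
      ({Av, Bv, Cv, Dv} : Set _) = {X1, X2, X3, X4} →
      S = {X1, X2, X3, X4} := fun _ _ _ _ h => hverts.trans h
  rcases s0 with s0 | s0 <;> rcases s1 with s1 | s1 <;> rcases t0 with t0 | t0 <;>
    rcases t1 with t1 | t1
  · exact absurd ⟨t0, t1⟩ hBAne
  · exact ⟨Av, Cv, Bv, Dv, hset _ _ _ _ (qp1 Av Bv Cv Dv),
      by omega, by omega, by omega, by omega, by omega, by omega⟩
  · exact ⟨Av, Bv, Cv, Dv, hverts, by omega, by omega, by omega, by omega, by omega, by omega⟩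
  · exact absurd ⟨t0, t1⟩ hBDne
  · exact absurd ⟨t0, t1⟩ hBAne
  · exact ⟨Bv, Dv, Av, Cv, hset _ _ _ _ (qp2 Av Bv Cv Dv),
      by omega, by omega, by omega, by omega, by omega, by omega⟩
  · exact ⟨Cv, Dv, Av, Bv, hset _ _ _ _ (qp3 Av Bv Cv Dv),
      by omega, by omega, by omega, by omega, by omega, by omega⟩
  · exact absurd ⟨t0, t1⟩ hBDne
  · exact absurd ⟨t0, t1⟩ hBAne
  · exact ⟨Cv, Av, Dv, Bv, hset _ _ _ _ (qp4 Av Bv Cv Dv),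
      by omega, by omega, by omega, by omega, by omega, by omega⟩
  · exact ⟨Bv, Av, Dv, Cv, hset _ _ _ _ (qp5 Av Bv Cv Dv),
      by omega, by omega, by omega, by omega, by omega, by omega⟩
  · exact absurd ⟨t0, t1⟩ hBDne
  · exact absurd ⟨t0, t1⟩ hBAne
  · exact ⟨Dv, Bv, Cv, Av, hset _ _ _ _ (qp6 Av Bv Cv Dv),
      by omega, by omega, by omega, by omega, by omega, by omega⟩
  · exact ⟨Dv, Cv, Bv, Av, hset _ _ _ _ (qp7 Av Bv Cv Dv),
      by omega, by omega, by omega, by omega, by omega, by omega⟩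
  · exact absurd ⟨t0, t1⟩ hBDne

lemma classify {n₁ n₂ : ℕ} (G' : (gridGraph ![n₁, n₂]).Subgraph)
    (φ : G'.coe ≃g gridGraph (fun _ : Fin 2 => (2 : ℕ))) :
    ∃ A B C D : ∀ i, Fin (![n₁, n₂] i),
      G'.verts = {A, B, C, D} ∧
      (B 0 : ℕ) = (A 0 : ℕ) + 1 ∧ (B 1 : ℕ) = (A 1 : ℕ) ∧
      (C 0 : ℕ) = (A 0 : ℕ) ∧ (C 1 : ℕ) = (A 1 : ℕ) + 1 ∧
      (D 0 : ℕ) = (A 0 : ℕ) + 1 ∧ (D 1 : ℕ) = (A 1 : ℕ) + 1 := by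
  classical
  set ψ := φ.symm with hψ
  have adj : ∀ (u v : ∀ _ : Fin 2, Fin 2),
      (gridGraph (fun _ : Fin 2 => (2:ℕ))).Adj u v →
      (gridGraph ![n₁, n₂]).Adj (ψ u : G'.verts).1 (ψ v : G'.verts).1 := by
    intro u v huv
    exact G'.adj_sub (ψ.map_adj_iff.2 huv)
  have inj : ∀ u v : ∀ _ : Fin 2, Fin 2, (ψ u : G'.verts).1 = (ψ v : G'.verts).1 → u = v := by
    intro u v huv
    exact ψ.toEquiv.injective (Subtype.ext huv)
  have hverts : G'.verts = {(ψ ![0,0] : G'.verts).1, (ψ ![1,0] : G'.verts).1,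
      (ψ ![0,1] : G'.verts).1, (ψ ![1,1] : G'.verts).1} := by
    ext x
    constructor
    · intro hx
      have henum : ∀ w : (∀ _ : Fin 2, Fin 2),
          w = ![0,0] ∨ w = ![1,0] ∨ w = ![0,1] ∨ w = ![1,1] := by decide
      have hx' : (ψ (φ ⟨x, hx⟩) : G'.verts) = ⟨x, hx⟩ := φ.toEquiv.symm_apply_apply _
      have hval : ((ψ (φ ⟨x, hx⟩) : G'.verts) : ∀ i, Fin (![n₁, n₂] i)) = x :=
        congrArg Subtype.val hx'
      simp only [Set.mem_insert_iff, Set.mem_singleton_iff]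
      rcases henum (φ ⟨x, hx⟩) with h | h | h | h <;> rw [h] at hval
      · exact Or.inl hval.symm
      · exact Or.inr (Or.inl hval.symm)
      · exact Or.inr (Or.inr (Or.inl hval.symm))
      · exact Or.inr (Or.inr (Or.inr hval.symm))
    · intro hx
      rcases hx with h | h | h | h <;> rw [h] <;> exact Subtype.coe_prop _
  refine classify_core G'.verts _ _ _ _ hverts
    (grid_adj_coords (adj ![0,0] ![1,0] ⟨0, by decide, by decide⟩))
    (grid_adj_coords (adj ![1,0] ![1,1] ⟨1, by decide, by decide⟩))
    (grid_adj_coords (adj ![1,1] ![0,1] ⟨0, by decide, by decide⟩))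
    (grid_adj_coords (adj ![0,1] ![0,0] ⟨1, by decide, by decide⟩))
    ?_ ?_ ?_ ?_
  · rintro ⟨h0, h1⟩
    exact absurd (inj _ _ (vert_ext h0 h1)) (by decide)
  · rintro ⟨h0, h1⟩
    exact absurd (inj _ _ (vert_ext h0 h1)) (by decide)
  · rintro ⟨h0, h1⟩
    exact absurd (inj _ _ (vert_ext h0 h1)) (by decide)
  · rintro ⟨h0, h1⟩
    exact absurd (inj _ _ (vert_ext h0 h1)) (by decide)

lemma sum_four {α : Type*} [DecidableEq α] (f : α → ℤ) (a b c d : α)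
    (hab : a ≠ b) (hac : a ≠ c) (had : a ≠ d) (hbc : b ≠ c) (hbd : b ≠ d) (hcd : c ≠ d) :
    ∑ᶠ v ∈ ({a, b, c, d} : Set α), f v = f a + f b + f c + f d := by
  rw [show ({a, b, c, d} : Set α) = ↑({a, b, c, d} : Finset α) by simp]
  rw [finsum_mem_coe_finset]
  rw [Finset.sum_insert (by simp [hab, hac, had]),
    Finset.sum_insert (by simp [hbc, hbd]),
    Finset.sum_insert (by simp [hcd]), Finset.sum_singleton]
  ring

theorem main_aux (n₁ n₂ : ℕ) (h₁ : 2 ≤ n₁) (h₂ : 2 ≤ n₂)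
    (f : (∀ i, Fin (![n₁, n₂] i)) → ℤ)
    (hf : ∀ v, f v = Ffun n₁ n₂ ((v 0 : ℕ) + 1) ((v 1 : ℕ) + 1))
    (c : ℤ) (hc : c = 2 * ((n₁ : ℤ) * n₂ + 1) + 2 * Eps n₁ n₂) :
    IsMagicVertexLabeling (gridGraph ![n₁, n₂]) (gridGraph fun _ : Fin 2 => (2:ℕ)) f c := by
  classical
  have hcardN : Fintype.card (∀ i, Fin (![n₁, n₂] i)) = n₁ * n₂ := by
    rw [Fintype.card_pi]
    simp [Fin.prod_univ_two]
  have hmaps : Set.MapsTo f Set.univ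
      (Set.Icc 1 (Fintype.card (∀ i, Fin (![n₁, n₂] i)) : ℤ)) := by
    intro v _
    have h0 := coord0_lt v
    have h1 := coord1_lt v
    have hb := Frange n₁ n₂ ((v 0 : ℕ) + 1) ((v 1 : ℕ) + 1) h₂
      (by omega) (by omega) (by omega) (by omega)
    rw [Set.mem_Icc, hf v, hcardN]
    refine ⟨hb.1, ?_⟩
    calc Ffun n₁ n₂ ((v 0 : ℕ) + 1) ((v 1 : ℕ) + 1) ≤ (n₁ : ℤ) * n₂ := hb.2
      _ = ((n₁ * n₂ : ℕ) : ℤ) := by push_cast; ring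
  have hinj : Set.InjOn f Set.univ := by
    intro x _ y _ hxy
    rw [hf x, hf y] at hxy
    have h0x := coord0_lt x
    have h1x := coord1_lt x
    have h0y := coord0_lt y
    have h1y := coord1_lt y
    obtain ⟨e1, e2⟩ := Finj n₁ n₂ _ _ _ _ h₂ (by omega) (by omega) (by omega) (by omega)
      (by omega) (by omega) (by omega) (by omega) hxy
    exact vert_ext (by omega) (by omega)
  have himg : f '' Set.univ = Set.Icc 1 (Fintype.card (∀ i, Fin (![n₁, n₂] i)) : ℤ) := by
    refine Set.eq_of_subset_of_ncard_le (Set.MapsTo.image_subset hmaps) ?_ (Set.finite_Icc _ _)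
    have hn1 : (f '' Set.univ).ncard = n₁ * n₂ := by
      rw [Set.ncard_image_of_injOn hinj, Set.ncard_univ, Nat.card_eq_fintype_card, hcardN]
    have hn2 : (Set.Icc (1:ℤ) (Fintype.card (∀ i, Fin (![n₁, n₂] i)) : ℤ)).ncard = n₁ * n₂ := by
      rw [← Finset.coe_Icc, Set.ncard_coe_finset, Int.card_Icc]
      simp [hcardN]
      omega
    rw [hn1, hn2]
  refine ⟨⟨hmaps, hinj, himg.ge⟩, ?_⟩
  rintro G' ⟨φ⟩
  obtain ⟨A, B, C, D, hverts, hB0, hB1, hC0, hC1, hD0, hD1⟩ := classify G' φ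
  have hAB : A ≠ B := fun h => by rw [h] at hB0; omega
  have hAC : A ≠ C := fun h => by rw [h] at hC1; omega
  have hAD : A ≠ D := fun h => by rw [h] at hD0; omega
  have hBC : B ≠ C := fun h => by rw [h] at hB0; omega
  have hBD : B ≠ D := fun h => by rw [h] at hB1; omega
  have hCD : C ≠ D := fun h => by rw [h] at hC0; omega
  rw [hverts, sum_four f A B C D hAB hAC hAD hBC hBD hCD,
    hf A, hf B, hf C, hf D, hB0, hB1, hC0, hC1, hD0, hD1, hc]
  exact Fsum n₁ n₂ ((A 0 : ℕ) + 1) ((A 1 : ℕ) + 1)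


/-- the explicit vertex labeling `f` (where a vertex `v` of `Grid(n₁,n₂)` has
coordinates `i = v 0 + 1 ∈ [n₁]`, `j = v 1 + 1 ∈ [n₂]`) is a `Q₂`-magic vertex labeling of
`Grid(n₁,n₂)` with `Q₂`-magic sum `2(n₁n₂+1)` if `n₁` is odd or `n₂` is even, and
`2(n₁n₂+2)` if `n₁` is even and `n₂` is odd. -/
theorem base_case_vertex_labeling_is_magic (n₁ n₂ : ℕ) (h₁ : 2 ≤ n₁) (h₂ : 2 ≤ n₂) :
    IsMagicVertexLabeling (gridGraph ![n₁, n₂]) (gridGraph (fun _ : Fin 2 => (2 : ℕ)))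
      (fun v =>
        let i : ℕ := (v 0 : ℕ) + 1
        let j : ℕ := (v 1 : ℕ) + 1
        let ε : ℤ := if Even n₁ ∧ Odd n₂ then 1 else 0
        if Odd i ∧ Odd j then ((i : ℤ) - 1) * n₂ + j
        else if Even i ∧ Even j then ((i : ℤ) - 1) * n₂ + ((n₂ : ℤ) + 1 - j)
        else if Odd i then ((n₁ : ℤ) - i) * n₂ + j + ε
        else ((n₁ : ℤ) - i) * n₂ + ((n₂ : ℤ) + 1 - j + ε))
      (if Odd n₁ ∨ Even n₂ then 2 * ((n₁ : ℤ) * n₂ + 1) else 2 * ((n₁ : ℤ) * n₂ + 2)) := by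
  apply main_aux n₁ n₂ h₁ h₂
  · intro v
    rfl
  · rw [Eps]
    by_cases h : Even n₁ ∧ Odd n₂
    · rw [if_neg, if_pos h]
      · ring
      · rintro (h' | h')
        · exact (Nat.not_odd_iff_even.2 h.1) h'
        · exact (Nat.not_odd_iff_even.2 h') h.2
    · rw [if_pos, if_neg h]
      · ring
      · by_contra h'
        push_neg at h'
        exact h ⟨Nat.not_odd_iff_even.1 h'.1, Nat.not_even_iff_odd.1 h'.2⟩
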